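/- (Sufficiency of the geometric optimality conditions, Eq. (10).) Let {(q_i, ρ_i)}_{i=1}^N be an ensemble of qubit states with Bloch vectors v_i and q_1 = max_i q_i. Suppose there exist reals p_i > 0, r_i > 0 and unit vectors u_i ∈ ℝ³ (i = 1,…,N) such that ∑_i p_i = 1, ∑_i p_i u_i = 0, r_i − r_1 = q_1 − q_i for all i, and r_i u_i − r_1 u_1 = q_i v_i − q_1 v_1 for all i. Then the POVM M_i = p_i(I + u_i·σ) is optimal and p_guess = q_1 + r_1 > q_1. -/

import Mathlib

open Matrix
open scoped ComplexOrder

noncomputable section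

/-- The Pauli matrix σ_X. -/
def sigmaX : Matrix (Fin 2) (Fin 2) ℂ := !![0, 1; 1, 0]

/-- The Pauli matrix σ_Y. -/
def sigmaY : Matrix (Fin 2) (Fin 2) ℂ := !![0, -Complex.I; Complex.I, 0]

/-- The Pauli matrix σ_Z. -/
def sigmaZ : Matrix (Fin 2) (Fin 2) ℂ := !![1, 0; 0, -1]

/-- `v · σ = v₁ σ_X + v₂ σ_Y + v₃ σ_Z` for a vector `v ∈ ℝ³`. -/
def pauliDot (v : EuclideanSpace ℝ (Fin 3)) : Matrix (Fin 2) (Fin 2) ℂ :=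
  (v 0 : ℂ) • sigmaX + (v 1 : ℂ) • sigmaY + (v 2 : ℂ) • sigmaZ

/-- A qubit state: a 2×2 complex positive semidefinite matrix with trace 1. -/
def IsQubitState (ρ : Matrix (Fin 2) (Fin 2) ℂ) : Prop :=
  ρ.PosSemidef ∧ ρ.trace = 1

/-- An `N`-outcome POVM: positive semidefinite matrices summing to the identity. -/
def IsPOVM {N : ℕ} (M : Fin N → Matrix (Fin 2) (Fin 2) ℂ) : Prop :=
  (∀ i, (M i).PosSemidef) ∧ ∑ i, M i = 1

/-- The guessing probability of the ensemble `{(q i, ρ i)}`: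
the supremum over all `N`-outcome POVMs of `∑ i, q i · Re (tr (ρ i * M i))`. -/
def pGuess {N : ℕ} (q : Fin N → ℝ) (ρ : Fin N → Matrix (Fin 2) (Fin 2) ℂ) : ℝ :=
  sSup {x : ℝ | ∃ M : Fin N → Matrix (Fin 2) (Fin 2) ℂ,
    IsPOVM M ∧ x = ∑ i, q i * ((ρ i * M i).trace).re}

/-- A POVM is optimal when it attains the guessing probability. -/
def IsOptimalPOVM {N : ℕ} (q : Fin N → ℝ) (ρ M : Fin N → Matrix (Fin 2) (Fin 2) ℂ) : Prop :=
  IsPOVM M ∧ ∑ i, q i * ((ρ i * M i).trace).re = pGuess q ρ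

/- ### Auxiliary lemmas -/

lemma pauliDot_eq (w : EuclideanSpace ℝ (Fin 3)) :
    pauliDot w = !![(w 2 : ℂ), (w 0:ℂ) - (w 1:ℂ)*Complex.I;
                    (w 0:ℂ) + (w 1:ℂ)*Complex.I, -(w 2:ℂ)] := by
  unfold pauliDot sigmaX sigmaY sigmaZ
  ext i j
  fin_cases i <;> fin_cases j <;> simp <;> ring

/-- `a • I + w · σ` as a convenient normal form. -/
def Hm (a : ℝ) (w : EuclideanSpace ℝ (Fin 3)) : Matrix (Fin 2) (Fin 2) ℂ :=
  (a:ℂ) • 1 + pauliDot w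

lemma Hm_eq (a : ℝ) (w : EuclideanSpace ℝ (Fin 3)) :
    Hm a w = !![(a:ℂ) + (w 2:ℂ), (w 0:ℂ) - (w 1:ℂ)*Complex.I;
                (w 0:ℂ) + (w 1:ℂ)*Complex.I, (a:ℂ) - (w 2:ℂ)] := by
  unfold Hm
  rw [pauliDot_eq]
  ext i j
  fin_cases i <;> fin_cases j <;> simp [Matrix.one_apply] <;> ring

lemma Hm_trace (a : ℝ) (w : EuclideanSpace ℝ (Fin 3)) :
    (Hm a w).trace = ((2*a : ℝ) : ℂ) := by
  rw [Hm_eq, Matrix.trace_fin_two_of]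
  push_cast; ring

lemma Hm_mul_trace (a b : ℝ) (w z : EuclideanSpace ℝ (Fin 3)) :
    ((Hm a w) * (Hm b z)).trace
      = ((2*(a*b + w 0 * z 0 + w 1 * z 1 + w 2 * z 2) : ℝ) : ℂ) := by
  rw [Hm_eq, Hm_eq, Matrix.mul_fin_two, Matrix.trace_fin_two_of]
  push_cast
  linear_combination (-2*(w 1:ℂ)*(z 1:ℂ)) * Complex.I_mul_I

lemma norm_sq_eq3 (w : EuclideanSpace ℝ (Fin 3)) :
    ‖w‖^2 = w 0^2 + w 1^2 + w 2^2 := by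
  rw [EuclideanSpace.norm_eq]
  rw [Real.sq_sqrt (by positivity)]
  simp [Fin.sum_univ_three, Real.norm_eq_abs, sq_abs]

lemma Hm_posSemidef {a : ℝ} {w : EuclideanSpace ℝ (Fin 3)} (h : ‖w‖ ≤ a) :
    (Hm a w).PosSemidef := by
  have ha : 0 ≤ a := le_trans (norm_nonneg w) h
  have hw2 : w 0^2 + w 1^2 + w 2^2 ≤ a^2 := by
    rw [← norm_sq_eq3]; exact pow_le_pow_left₀ (norm_nonneg w) h 2
  refine Matrix.posSemidef_iff_dotProduct_mulVec.mpr ⟨?_, ?_⟩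
  · rw [Hm_eq]
    unfold Matrix.IsHermitian
    ext i j
    fin_cases i <;> fin_cases j <;>
      simp [Matrix.conjTranspose_apply, Complex.ext_iff]
  · intro x
    have hz : star x ⬝ᵥ ((Hm a w) *ᵥ x) =
        (((a + w 2)*((x 0).re^2 + (x 0).im^2) + (a - w 2)*((x 1).re^2 + (x 1).im^2)
          + 2*(w 0 * ((x 0).re*(x 1).re + (x 0).im*(x 1).im)
               + w 1 * ((x 0).re*(x 1).im - (x 0).im*(x 1).re)) : ℝ) : ℂ) := by
      rw [Hm_eq]
      simp [dotProduct, mulVec, Fin.sum_univ_two, Complex.ext_iff,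
        Complex.add_re, Complex.add_im, Complex.mul_re, Complex.mul_im,
        ← Complex.ofReal_pow]
      constructor <;> ring
    rw [hz, Complex.zero_le_real]
    rcases eq_or_lt_of_le (by nlinarith : -(a) ≤ w 2) with heq | hlt
    · have h0 : w 0 = 0 ∧ w 1 = 0 := by constructor <;> nlinarith
      rw [h0.1, h0.2, ← heq]
      nlinarith [sq_nonneg (x 1).re, sq_nonneg (x 1).im]
    · have hα : 0 < a + w 2 := by linarith
      nlinarith [sq_nonneg ((a + w 2)*(x 0).re + w 0*(x 1).re + w 1*(x 1).im),
        sq_nonneg ((a + w 2)*(x 0).im + w 0*(x 1).im - w 1*(x 1).re),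
        mul_nonneg (by nlinarith : (0:ℝ) ≤ (a + w 2)*(a - w 2) - w 0^2 - w 1^2)
          (by positivity : (0:ℝ) ≤ (x 1).re^2 + (x 1).im^2)]

lemma pauliDot_smul (c : ℝ) (w : EuclideanSpace ℝ (Fin 3)) :
    pauliDot (c • w) = (c:ℂ) • pauliDot w := by
  unfold pauliDot sigmaX sigmaY sigmaZ
  have h : ∀ k, (c • w) k = c * w k := fun k => rfl
  ext i j
  fin_cases i <;> fin_cases j <;> simp [h] <;> ring

lemma pauliDot_add (w z : EuclideanSpace ℝ (Fin 3)) :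
    pauliDot (w + z) = pauliDot w + pauliDot z := by
  unfold pauliDot sigmaX sigmaY sigmaZ
  have h : ∀ k, (w + z) k = w k + z k := fun k => rfl
  ext i j
  fin_cases i <;> fin_cases j <;> simp [h] <;> ring

lemma pauliDot_zero : pauliDot 0 = 0 := by
  unfold pauliDot
  have h : ∀ k, (0 : EuclideanSpace ℝ (Fin 3)) k = 0 := fun k => rfl
  simp [h]

lemma pauliDot_sub (w z : EuclideanSpace ℝ (Fin 3)) :
    pauliDot (w - z) = pauliDot w - pauliDot z := by
  unfold pauliDot sigmaX sigmaY sigmaZ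
  have h : ∀ k, (w - z) k = w k - z k := fun k => rfl
  ext i j
  fin_cases i <;> fin_cases j <;> simp [h] <;> ring

lemma Hm_sub (a b : ℝ) (w z : EuclideanSpace ℝ (Fin 3)) :
    Hm a w - Hm b z = Hm (a - b) (w - z) := by
  unfold Hm
  rw [pauliDot_sub]
  push_cast
  module

lemma Hm_smul (c a : ℝ) (w : EuclideanSpace ℝ (Fin 3)) :
    (c:ℂ) • Hm a w = Hm (c*a) (c • w) := by
  unfold Hm
  rw [pauliDot_smul]
  push_cast
  module

lemma Hm_sum {N : ℕ} (a : Fin N → ℝ) (w : Fin N → EuclideanSpace ℝ (Fin 3)) :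
    ∑ i, Hm (a i) (w i) = Hm (∑ i, a i) (∑ i, w i) := by
  induction (Finset.univ : Finset (Fin N)) using Finset.induction with
  | empty => simp [Hm, pauliDot_zero]
  | insert _ _ h ih =>
      rw [Finset.sum_insert h, Finset.sum_insert h, Finset.sum_insert h, ih]
      unfold Hm
      rw [pauliDot_add]
      push_cast
      module

lemma psd_trace_re_nonneg {n : Type*} [Fintype n] [DecidableEq n]
    {A B : Matrix n n ℂ} (hA : A.PosSemidef) (hB : B.PosSemidef) :
    0 ≤ ((A * B).trace).re := by
  obtain ⟨C, rfl⟩ : ∃ C : Matrix n n ℂ, A = Cᴴ * C := by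
    open scoped MatrixOrder in
    obtain ⟨X, hX, -, hXA⟩ :=
      sub_zero A ▸ CFC.exists_sqrt_of_isSelfAdjoint_of_quasispectrumRestricts hA.isHermitian
        (QuasispectrumRestricts.nnreal_of_nonneg hA.nonneg)
    rw [sub_zero] at hXA
    refine ⟨X, ?_⟩
    rw [← hXA, ← Matrix.star_eq_conjTranspose, hX.star_eq]
  rw [Matrix.mul_assoc, Matrix.trace_mul_comm]
  have hP : (C * B * Cᴴ).PosSemidef := hB.mul_mul_conjTranspose_same C
  rw [Matrix.trace, Complex.re_sum]
  refine Finset.sum_nonneg fun i _ => ?_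
  have := hP.re_dotProduct_nonneg (Pi.single i 1)
  simpa [dotProduct, mulVec, Pi.single_apply, Matrix.diag] using this

/-- Sufficiency of the geometric optimality conditions (Eq. (10)).
Index `0` plays the role of index `1` in the paper, so `q 0 = max_i q i`. -/
theorem geometric_conditions_sufficient {N : ℕ} [NeZero N]
    (q : Fin N → ℝ) (v : Fin N → EuclideanSpace ℝ (Fin 3))
    (ρ : Fin N → Matrix (Fin 2) (Fin 2) ℂ)
    (hq : ∀ i, 0 < q i) (hqsum : ∑ i, q i = 1)
    (hv : ∀ i, ‖v i‖ ≤ 1)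
    (hρ : ∀ i, ρ i = (2⁻¹ : ℂ) • (1 + pauliDot (v i)))
    (hmax : ∀ i, q i ≤ q 0)
    (p r : Fin N → ℝ) (u : Fin N → EuclideanSpace ℝ (Fin 3))
    (hp : ∀ i, 0 < p i) (hr : ∀ i, 0 < r i) (hunit : ∀ i, ‖u i‖ = 1)
    (hpsum : ∑ i, p i = 1) (hpu : ∑ i, p i • u i = 0)
    (hre : ∀ i, r i - r 0 = q 0 - q i)
    (hru : ∀ i, r i • u i - r 0 • u 0 = q i • v i - q 0 • v 0) :
    IsOptimalPOVM q ρ (fun i => (p i : ℂ) • (1 + pauliDot (u i))) ∧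
      pGuess q ρ = q 0 + r 0 ∧ q 0 < pGuess q ρ := by
  -- componentwise hypotheses
  have hruc : ∀ i k, r i * u i k - r 0 * u 0 k = q i * v i k - q 0 * v 0 k :=
    fun i k => congrFun (congrArg WithLp.ofLp (hru i)) k
  have hpuc : ∀ k, ∑ i, p i * u i k = 0 := by
    intro k
    have h1 := congrFun (congrArg WithLp.ofLp hpu) k
    have h2 : (∑ i, p i • u i) k = ∑ i, p i * u i k := by
      rw [show ((∑ i, p i • u i) k) = (∑ i, p i • u i) k from rfl]
      rw [WithLp.ofLp_sum]
      exact Finset.sum_apply k Finset.univ _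
    rw [h2] at h1
    simpa using h1
  have huc : ∀ i, u i 0^2 + u i 1^2 + u i 2^2 = 1 := by
    intro i
    have := norm_sq_eq3 (u i)
    rw [hunit i] at this
    linarith [this]
  -- normal forms
  have hM : ∀ i, (p i : ℂ) • (1 + pauliDot (u i)) = Hm (p i) (p i • u i) := by
    intro i
    unfold Hm
    rw [pauliDot_smul, ← smul_add]
  have hρH : ∀ i, ρ i = Hm (2⁻¹ : ℝ) ((2:ℝ)⁻¹ • v i) := by
    intro i
    rw [hρ i]
    unfold Hm
    rw [pauliDot_smul]
    push_cast
    module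
  have hqρ : ∀ i, (q i : ℂ) • ρ i = Hm (q i * 2⁻¹) ((q i * 2⁻¹) • v i) := by
    intro i
    rw [hρH i, Hm_smul, smul_smul]
  -- the POVM in normal form
  have hMpsd : ∀ i, (Hm (p i) (p i • u i)).PosSemidef := by
    intro i
    apply Hm_posSemidef
    rw [norm_smul, hunit i, Real.norm_eq_abs, abs_of_pos (hp i), mul_one]
  have hMsum : ∑ i, Hm (p i) (p i • u i) = 1 := by
    rw [Hm_sum, hpsum, hpu]
    unfold Hm
    rw [pauliDot_zero]
    simp
  -- achieved value
  have hval : ∑ i, q i * ((ρ i * (Hm (p i) (p i • u i))).trace).re = q 0 + r 0 := by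
    have hterm : ∀ i, q i * ((ρ i * (Hm (p i) (p i • u i))).trace).re
        = p i * (q 0 + r 0) + ((q 0 * v 0 0 - r 0 * u 0 0) * (p i * u i 0)
          + (q 0 * v 0 1 - r 0 * u 0 1) * (p i * u i 1)
          + (q 0 * v 0 2 - r 0 * u 0 2) * (p i * u i 2)) := by
      intro i
      rw [hρH i, Hm_mul_trace, Complex.ofReal_re]
      have hs : ∀ k, ((2:ℝ)⁻¹ • v i) k = 2⁻¹ * v i k := fun k => rfl
      have hs2 : ∀ k, (p i • u i) k = p i * u i k := fun k => rfl
      rw [hs 0, hs 1, hs 2, hs2 0, hs2 1, hs2 2]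
      linear_combination (-(p i * u i 0)) * hruc i 0 + (-(p i * u i 1)) * hruc i 1
        + (-(p i * u i 2)) * hruc i 2 + (p i * r i) * huc i + (p i) * hre i
    calc ∑ i, q i * ((ρ i * (Hm (p i) (p i • u i))).trace).re
        = ∑ i, (p i * (q 0 + r 0) + ((q 0 * v 0 0 - r 0 * u 0 0) * (p i * u i 0)
          + (q 0 * v 0 1 - r 0 * u 0 1) * (p i * u i 1)
          + (q 0 * v 0 2 - r 0 * u 0 2) * (p i * u i 2))) :=
          Finset.sum_congr rfl fun i _ => hterm i
      _ = (∑ i, p i) * (q 0 + r 0)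
          + ((q 0 * v 0 0 - r 0 * u 0 0) * (∑ i, p i * u i 0)
          + (q 0 * v 0 1 - r 0 * u 0 1) * (∑ i, p i * u i 1)
          + (q 0 * v 0 2 - r 0 * u 0 2) * (∑ i, p i * u i 2)) := by
          rw [Finset.sum_add_distrib, Finset.sum_add_distrib, Finset.sum_add_distrib,
            ← Finset.sum_mul, ← Finset.mul_sum, ← Finset.mul_sum, ← Finset.mul_sum]
      _ = q 0 + r 0 := by
          rw [hpsum, hpuc 0, hpuc 1, hpuc 2]
          ring
  -- upper bound via the dual certificate Y
  set Y : Matrix (Fin 2) (Fin 2) ℂ :=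
    Hm ((q 0 + r 0)/2) ((2:ℝ)⁻¹ • (q 0 • v 0 - r 0 • u 0)) with hY
  have hYpsd : ∀ i, (Y - (q i:ℂ) • ρ i).PosSemidef := by
    intro i
    rw [hY, hqρ i, Hm_sub]
    have hvec : (2:ℝ)⁻¹ • (q 0 • v 0 - r 0 • u 0) - (q i * 2⁻¹) • v i
        = (-(r i)/2) • u i := by
      ext k
      have e1 : ((2:ℝ)⁻¹ • (q 0 • v 0 - r 0 • u 0) - (q i * 2⁻¹) • v i) k
          = 2⁻¹ * (q 0 * v 0 k - r 0 * u 0 k) - (q i * 2⁻¹) * v i k := rfl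
      have e2 : (((-(r i)/2) : ℝ) • u i) k = (-(r i)/2) * u i k := rfl
      rw [e1, e2]
      linear_combination ((2:ℝ)⁻¹) * hruc i k
    rw [hvec]
    apply Hm_posSemidef
    rw [norm_smul, hunit i, Real.norm_eq_abs, mul_one]
    rw [abs_of_neg (by linarith [hr i] : -(r i)/2 < 0)]
    have := hre i
    linarith
  have hYtrace : (Y.trace).re = q 0 + r 0 := by
    rw [hY, Hm_trace, Complex.ofReal_re]
    ring
  have hub : ∀ B : Fin N → Matrix (Fin 2) (Fin 2) ℂ, IsPOVM B →
      ∑ i, q i * ((ρ i * B i).trace).re ≤ q 0 + r 0 := by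
    intro B hB
    have hterm : ∀ i, q i * ((ρ i * B i).trace).re ≤ ((Y * B i).trace).re := by
      intro i
      have h1 : ((Y * B i).trace).re - q i * ((ρ i * B i).trace).re
          = (((Y - (q i:ℂ) • ρ i) * B i).trace).re := by
        rw [Matrix.sub_mul, Matrix.trace_sub, Complex.sub_re, Matrix.smul_mul,
          Matrix.trace_smul, smul_eq_mul]
        simp [Complex.mul_re]
      have h2 : 0 ≤ (((Y - (q i:ℂ) • ρ i) * B i).trace).re :=
        psd_trace_re_nonneg (hYpsd i) (hB.1 i)
      linarith
    calc ∑ i, q i * ((ρ i * B i).trace).re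
        ≤ ∑ i, ((Y * B i).trace).re := Finset.sum_le_sum fun i _ => hterm i
      _ = ((Y * ∑ i, B i).trace).re := by
          rw [Finset.mul_sum, Matrix.trace_sum, Complex.re_sum]
      _ = (Y.trace).re := by rw [hB.2, Matrix.mul_one]
      _ = q 0 + r 0 := hYtrace
  -- conclude about pGuess
  have hMfun : (fun i => (p i : ℂ) • (1 + pauliDot (u i)))
      = fun i => Hm (p i) (p i • u i) := funext hM
  have hPOVM : IsPOVM (fun i => (p i : ℂ) • (1 + pauliDot (u i))) := by
    rw [hMfun]
    exact ⟨hMpsd, hMsum⟩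
  have hvalue : ∑ i, q i * ((ρ i * ((fun i => (p i : ℂ) • (1 + pauliDot (u i))) i)).trace).re
      = q 0 + r 0 := by
    simp only [hM]
    exact hval
  have hguess : pGuess q ρ = q 0 + r 0 := by
    apply IsGreatest.csSup_eq
    constructor
    · exact ⟨_, hPOVM, hvalue.symm⟩
    · rintro x ⟨M, hMP, hx⟩
      rw [hx]
      exact hub M hMP
  refine ⟨⟨hPOVM, ?_⟩, hguess, ?_⟩
  · rw [hguess]
    exact hvalue
  · rw [hguess]
    linarith [hr 0]

end
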